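/- Let (g,[·,·]_g) and (h,[·,·]_h) be Lie algebras and ρ: g → Der(h) a Lie algebra homomorphism into the derivations of h (an action of g on h). If T: h → g is an O-operator of weight 1, i.e. [Tu,Tv]_g = T(ρ(Tu)v − ρ(Tv)u + [u,v]_h) for all u,v ∈ h, then (h, [·,·]_h, ▷) with u▷v := ρ(Tu)v is a post-Lie algebra. -/
import Mathlib


/-- An O-operator of weight 1 on a Lie algebra g with respect to an action on h
induces a post-Lie algebra structure on h. -/
theorem oOperator_weightOne_inducesPostLie {K : Type*} [Field K] [CharZero K]
    {g : Type*} [LieRing g] [LieAlgebra K g]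
    {h : Type*} [LieRing h] [LieAlgebra K h]
    (ρ : g →ₗ[K] h →ₗ[K] h)
    (hder : ∀ (x : g) (u v : h), ρ x ⁅u, v⁆ = ⁅ρ x u, v⁆ + ⁅u, ρ x v⁆)
    (hhom : ∀ (x y : g) (u : h), ρ ⁅x, y⁆ u = ρ x (ρ y u) - ρ y (ρ x u))
    (T : h →ₗ[K] g)
    (hT : ∀ u v : h, ⁅T u, T v⁆ = T (ρ (T u) v - ρ (T v) u + ⁅u, v⁆)) :
    (∀ u v w : h, ρ (T u) ⁅v, w⁆ = ⁅ρ (T u) v, w⁆ + ⁅v, ρ (T u) w⁆) ∧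
    (∀ u v w : h, ρ (T ⁅u, v⁆) w =
      ρ (T u) (ρ (T v) w) - ρ (T (ρ (T u) v)) w
        - ρ (T v) (ρ (T u) w) + ρ (T (ρ (T v) u)) w) := by
  refine ⟨fun u v w => hder _ _ _, fun u v w => ?_⟩
  have key : T ⁅u, v⁆ = ⁅T u, T v⁆ - T (ρ (T u) v) + T (ρ (T v) u) := by
    rw [hT]; simp [map_add, map_sub]; abel
  rw [key]
  simp only [map_add, map_sub, LinearMap.add_apply, LinearMap.sub_apply, hhom]
  abel
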